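/- When restricted to 132-avoiding permutations, the middle order on S_n coincides with the weak order: for 132-avoiding v, w ∈ S_n, v ≤ w in the middle order if and only if v ≤ w in the weak order. -/
import Mathlib


/-- The inversion sequence of a permutation `w` of `Fin n` (0-indexed values):
`invSeq w i` counts the values `j < i` appearing after `i` in one-line notation. -/
def invSeq {n : ℕ} (w : Equiv.Perm (Fin n)) (i : Fin n) : ℕ :=
  (Finset.univ.filter (fun j : Fin n => j < i ∧ w.symm i < w.symm j)).card

/-- The middle order on permutations: coordinate-wise comparison of inversion sequences. -/
def midLe {n : ℕ} (v w : Equiv.Perm (Fin n)) : Prop :=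
  ∀ i, invSeq v i ≤ invSeq w i

/-- Number of inversions of a permutation. -/
def inversions {n : ℕ} (w : Equiv.Perm (Fin n)) : ℕ :=
  (Finset.univ.filter (fun p : Fin n × Fin n => p.1 < p.2 ∧ w p.2 < w p.1)).card

/-- The (right) weak order on `S_n`: generated by covers turning an ascent into a
descent via an adjacent transposition of positions. -/
def weakLe {n : ℕ} : Equiv.Perm (Fin n) → Equiv.Perm (Fin n) → Prop :=
  Relation.ReflTransGen (fun v w => ∃ i : Fin n, ∃ h : (i : ℕ) + 1 < n,
    v i < v ⟨(i : ℕ) + 1, h⟩ ∧ w = v * Equiv.swap i ⟨(i : ℕ) + 1, h⟩)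

/-- The Bruhat order on `S_n`: generated by covers transposing two entries forming a
non-inversion and increasing the inversion count by exactly one. -/
def bruhatLe {n : ℕ} : Equiv.Perm (Fin n) → Equiv.Perm (Fin n) → Prop :=
  Relation.ReflTransGen (fun v w => ∃ i j : Fin n, i < j ∧ v i < v j ∧
    w = v * Equiv.swap i j ∧ inversions w = inversions v + 1)

/-- `w` avoids the pattern 132. -/
def Avoids132 {n : ℕ} (w : Equiv.Perm (Fin n)) : Prop :=
  ¬ ∃ i j k : Fin n, i < j ∧ j < k ∧ w i < w k ∧ w k < w j

/-! ### Auxiliary definitions and lemmas -/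

/-- The (value-indexed) inversion set of a permutation: pairs `(a, b)` of values with
`a < b` such that `b` appears before `a` in one-line notation. -/
def InvSet {n : ℕ} (u : Equiv.Perm (Fin n)) : Finset (Fin n × Fin n) :=
  Finset.univ.filter (fun p => p.1 < p.2 ∧ u.symm p.2 < u.symm p.1)

lemma mem_invSet {n : ℕ} {u : Equiv.Perm (Fin n)} {p : Fin n × Fin n} :
    p ∈ InvSet u ↔ p.1 < p.2 ∧ u.symm p.2 < u.symm p.1 := by
  simp [InvSet]

lemma invSeq_eq {n : ℕ} (u : Equiv.Perm (Fin n)) (k : Fin n) :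
    invSeq u k = (Finset.univ.filter (fun j => (j, k) ∈ InvSet u)).card := by
  unfold invSeq; congr 1; ext j; simp [mem_invSet]

lemma swap_adj_lt {n : ℕ} {i : Fin n} {h : (i:ℕ)+1 < n} {x y : Fin n}
    (hxy : x < y) (hne : ¬ (x = i ∧ y = ⟨(i:ℕ)+1, h⟩)) :
    Equiv.swap i ⟨(i:ℕ)+1, h⟩ x < Equiv.swap i ⟨(i:ℕ)+1, h⟩ y := by
  have hne' : ¬ ((x:ℕ) = i ∧ (y:ℕ) = (i:ℕ)+1) := by
    simpa [Fin.ext_iff] using hne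
  rw [Fin.lt_def] at hxy
  simp only [Equiv.swap_apply_def, Fin.ext_iff] at *
  split_ifs <;> simp only [Fin.lt_def] at * <;> omega

lemma mul_swap_symm_apply {n : ℕ} (u : Equiv.Perm (Fin n)) (i i' : Fin n) (x : Fin n) :
    (u * Equiv.swap i i').symm x = Equiv.swap i i' (u.symm x) := by
  rw [Equiv.symm_apply_eq]
  simp [Equiv.Perm.mul_apply]

lemma invSet_mul_swap {n : ℕ} (u : Equiv.Perm (Fin n)) (i : Fin n) (h : (i:ℕ)+1 < n)
    (hasc : u i < u ⟨(i:ℕ)+1, h⟩) :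
    InvSet (u * Equiv.swap i ⟨(i:ℕ)+1, h⟩)
      = insert (u i, u ⟨(i:ℕ)+1, h⟩) (InvSet u) := by
  set i' : Fin n := ⟨(i:ℕ)+1, h⟩ with hi'
  have hii' : i < i' := by simp [hi', Fin.lt_def]
  ext p
  obtain ⟨a, b⟩ := p
  simp only [mem_invSet, Finset.mem_insert, mul_swap_symm_apply, Prod.mk.injEq]
  constructor
  · rintro ⟨hab, hlt⟩
    by_cases hp : a = u i ∧ b = u i'
    · exact Or.inl hp
    · refine Or.inr ⟨hab, ?_⟩
      by_contra hcon
      have hne0 : u.symm a ≠ u.symm b := fun hh =>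
        absurd (u.symm.injective hh) (ne_of_lt hab)
      have h2 : u.symm a < u.symm b := lt_of_le_of_ne (not_lt.mp hcon) hne0
      have h3 := swap_adj_lt (i := i) (h := h) h2 ?_
      · exact absurd hlt (not_lt.mpr h3.le)
      · rintro ⟨h4, h5⟩
        rw [← hi'] at h5
        exact hp ⟨by rw [← h4]; simp, by rw [← h5]; simp⟩
  · rintro (⟨rfl, rfl⟩ | ⟨hab, hlt⟩)
    · refine ⟨hasc, ?_⟩
      simp [Equiv.swap_apply_left, Equiv.swap_apply_right, hii']
    · refine ⟨hab, swap_adj_lt hlt ?_⟩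
      rintro ⟨h4, h5⟩
      rw [← hi'] at h5
      have h4' : b = u i := by rw [← h4]; simp
      have h5' : a = u i' := by rw [← h5]; simp
      rw [h4', h5'] at hab
      exact absurd hasc (not_lt.mpr hab.le)

lemma notMem_invSet_self {n : ℕ} (u : Equiv.Perm (Fin n)) (i : Fin n) (h : (i:ℕ)+1 < n) :
    (u i, u ⟨(i:ℕ)+1, h⟩) ∉ InvSet u := by
  simp only [mem_invSet, not_and]
  intro _
  simp [Fin.lt_def]

lemma lowerset_mem_iff {n : ℕ} (S : Finset (Fin n))
    (hS : ∀ a ∈ S, ∀ b, b < a → b ∈ S) (j : Fin n) :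
    j ∈ S ↔ (j:ℕ) < S.card := by
  constructor
  · intro hj
    have hsub : Finset.Iic j ⊆ S := by
      intro b hb
      rcases eq_or_lt_of_le (Finset.mem_Iic.mp hb) with rfl | hlt
      · exact hj
      · exact hS j hj b hlt
    have := Finset.card_le_card hsub
    rw [Fin.card_Iic] at this
    omega
  · intro hj
    by_contra hjS
    have hsub : S ⊆ Finset.Iio j := by
      intro a ha
      rw [Finset.mem_Iio]
      by_contra hja
      rcases eq_or_lt_of_le (not_lt.mp hja) with rfl | hlt
      · exact hjS ha
      · exact hjS (hS a ha j hlt)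
    have := Finset.card_le_card hsub
    rw [Fin.card_Iio] at this
    omega

lemma mem_invSet_iff_of_avoids {n : ℕ} {u : Equiv.Perm (Fin n)} (hu : Avoids132 u)
    (j k : Fin n) : (j, k) ∈ InvSet u ↔ (j:ℕ) < invSeq u k := by
  set S : Finset (Fin n) :=
    Finset.univ.filter (fun j : Fin n => j < k ∧ u.symm k < u.symm j) with hSdef
  have hmem : ∀ x : Fin n, x ∈ S ↔ x < k ∧ u.symm k < u.symm x := by
    intro x; simp [hSdef]
  have hlow : ∀ a ∈ S, ∀ b, b < a → b ∈ S := by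
    intro a ha b hba
    rw [hmem] at ha ⊢
    obtain ⟨hak, hpos⟩ := ha
    refine ⟨hba.trans hak, ?_⟩
    by_contra hcon
    have hbk : b ≠ k := ne_of_lt (hba.trans hak)
    have h1 : u.symm b < u.symm k :=
      lt_of_le_of_ne (not_lt.mp hcon) (fun hh => hbk (u.symm.injective hh))
    exact hu ⟨u.symm b, u.symm k, u.symm a, h1, hpos, by
      simp only [Equiv.apply_symm_apply]
      exact ⟨hba, hak⟩⟩
  have hcard : invSeq u k = S.card := rfl
  rw [mem_invSet, hcard, ← lowerset_mem_iff S hlow j, hmem]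

lemma eq_of_invSet_eq {n : ℕ} {v w : Equiv.Perm (Fin n)}
    (hvw : InvSet v = InvSet w) : v = w := by
  have key : StrictMono (fun p : Fin n => w.symm (v p)) := by
    intro p q hpq
    set x := v p with hx
    set y := v q with hy
    have hxy : x ≠ y := fun hh => absurd (v.injective hh) (ne_of_lt hpq)
    have hvx : v.symm x = p := by rw [hx]; simp
    have hvy : v.symm y = q := by rw [hy]; simp
    rcases lt_or_gt_of_ne hxy with hlt | hgt
    · have hnv : (x, y) ∉ InvSet v := by
        rw [mem_invSet]
        simp only [hvx, hvy, not_and]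
        intro _
        exact not_lt.mpr hpq.le
      rw [hvw] at hnv
      rw [mem_invSet] at hnv
      simp only [not_and] at hnv
      have := hnv hlt
      exact lt_of_le_of_ne (not_lt.mp this)
        (fun hh => hxy (w.symm.injective hh))
    · have hv' : (y, x) ∈ InvSet v := by
        rw [mem_invSet]
        exact ⟨hgt, by rw [hvx, hvy]; exact hpq⟩
      rw [hvw, mem_invSet] at hv'
      exact hv'.2
  have hrange : Set.range (fun p : Fin n => w.symm (v p)) = Set.range (id : Fin n → Fin n) := by
    rw [Set.range_id, Set.range_eq_univ]
    exact (v.trans w.symm).surjective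
  haveI : WellFoundedLT (Fin n) := inferInstance
  have hid := (StrictMono.range_inj (f := fun p : Fin n => w.symm (v p)) (g := id) key
    (strictMono_id : StrictMono (id : Fin n → Fin n))).1 hrange
  apply Equiv.ext
  intro p
  have := congrFun hid p
  simp only [id] at this
  calc v p = w (w.symm (v p)) := by simp
    _ = w p := by rw [this]

lemma exists_ascent_step {n : ℕ} {v w : Equiv.Perm (Fin n)}
    (hsub : InvSet v ⊆ InvSet w) (hne : v ≠ w) :
    ∃ (i : Fin n) (h : (i:ℕ)+1 < n), v i < v ⟨(i:ℕ)+1, h⟩ ∧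
      InvSet (v * Equiv.swap i ⟨(i:ℕ)+1, h⟩) ⊆ InvSet w ∧
      (InvSet (v * Equiv.swap i ⟨(i:ℕ)+1, h⟩)).card = (InvSet v).card + 1 := by
  have hD : (InvSet w \ InvSet v).Nonempty := by
    rw [Finset.sdiff_nonempty]
    intro hcon
    exact hne (eq_of_invSet_eq (Finset.Subset.antisymm hsub hcon))
  obtain ⟨p, hpD, hpmin⟩ := Finset.exists_min_image _
    (fun p : Fin n × Fin n => (v.symm p.2 : ℕ) - (v.symm p.1 : ℕ)) hD
  obtain ⟨a, b⟩ := p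
  rw [Finset.mem_sdiff] at hpD
  obtain ⟨hwmem, hvmem⟩ := hpD
  rw [mem_invSet] at hwmem
  obtain ⟨hab, hwpos⟩ := hwmem
  rw [mem_invSet, not_and] at hvmem
  have hv' := hvmem hab
  have hvpos : v.symm a < v.symm b :=
    lt_of_le_of_ne (not_lt.mp hv')
      (fun hh => absurd (v.symm.injective hh) (ne_of_lt hab))
  set pa := v.symm a with hpa
  set pb := v.symm b with hpb
  have hva : v pa = a := by rw [hpa]; simp
  have hvb : v pb = b := by rw [hpb]; simp
  by_cases hadj : (pb:ℕ) = (pa:ℕ) + 1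
  · have hpa1 : (pa:ℕ)+1 < n := hadj ▸ pb.isLt
    have hpbeq : (⟨(pa:ℕ)+1, hpa1⟩ : Fin n) = pb := by
      simp [Fin.ext_iff, hadj]
    have hasc : v pa < v ⟨(pa:ℕ)+1, hpa1⟩ := by
      rw [hpbeq, hva, hvb]; exact hab
    refine ⟨pa, hpa1, hasc, ?_, ?_⟩
    · rw [invSet_mul_swap v pa hpa1 hasc]
      apply Finset.insert_subset
      · rw [hva, hpbeq, hvb, mem_invSet]
        exact ⟨hab, hwpos⟩
      · exact hsub
    · rw [invSet_mul_swap v pa hpa1 hasc]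
      apply Finset.card_insert_of_notMem
      exact notMem_invSet_self v pa hpa1
  · exfalso
    have hgap2 : (pa:ℕ)+1 < (pb:ℕ) := by
      have := hvpos
      rw [Fin.lt_def] at this
      omega
    set pc : Fin n := ⟨(pa:ℕ)+1, lt_trans hgap2 pb.isLt⟩ with hpc
    set c := v pc with hc
    have hvc : v.symm c = pc := by rw [hc]; simp
    have hca : c ≠ a := by
      intro hh
      have : pc = pa := by rw [← hvc, hh]
      rw [Fin.ext_iff, hpc] at this
      simp at this
    have hcb : c ≠ b := by
      intro hh
      have : pc = pb := by rw [← hvc, hh]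
      rw [Fin.ext_iff, hpc] at this
      simp at this
      omega
    -- helper inequalities on positions in v
    have hpapc : pa < pc := by rw [Fin.lt_def, hpc]; simp
    have hpcpb : pc < pb := by rw [Fin.lt_def, hpc]; simpa using hgap2
    rcases lt_trichotomy c a with hlt | heq | hgt
    · -- c < a: (c,a) ∈ InvSet v ⊆ InvSet w, deduce (c,b) ∈ InvSet w \ InvSet v, smaller gap
      have h1 : (c, a) ∈ InvSet v := by
        rw [mem_invSet]; exact ⟨hlt, by rw [hvc]; exact hpapc⟩
      have h1w := hsub h1
      rw [mem_invSet] at h1w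
      have h2 : (c, b) ∈ InvSet w := by
        rw [mem_invSet]
        exact ⟨hlt.trans hab, hwpos.trans h1w.2⟩
      have h3 : (c, b) ∉ InvSet v := by
        rw [mem_invSet, not_and]
        intro _
        rw [hvc]
        exact not_lt.mpr hpcpb.le
      have := hpmin (c, b) (Finset.mem_sdiff.mpr ⟨h2, h3⟩)
      simp only [hvc, ← hpa, ← hpb] at this
      have hpcval : (pc:ℕ) = (pa:ℕ)+1 := rfl
      omega
    · exact hca heq
    · rcases lt_trichotomy c b with hltb | heqb | hgtb
      · -- a < c < b
        by_cases hac : (a, c) ∈ InvSet w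
        · have h3 : (a, c) ∉ InvSet v := by
            rw [mem_invSet, not_and]
            intro _
            rw [hvc]
            exact not_lt.mpr hpapc.le
          have := hpmin (a, c) (Finset.mem_sdiff.mpr ⟨hac, h3⟩)
          simp only [hvc, ← hpa, ← hpb] at this
          have hpcval : (pc:ℕ) = (pa:ℕ)+1 := rfl
          omega
        · by_cases hcbw : (c, b) ∈ InvSet w
          · have h3 : (c, b) ∉ InvSet v := by
              rw [mem_invSet, not_and]
              intro _
              rw [hvc]
              exact not_lt.mpr hpcpb.le
            have := hpmin (c, b) (Finset.mem_sdiff.mpr ⟨hcbw, h3⟩)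
            simp only [hvc, ← hpa, ← hpb] at this
            have hpcval : (pc:ℕ) = (pa:ℕ)+1 := rfl
            omega
          · rw [mem_invSet, not_and] at hac hcbw
            have h4 := not_lt.mp (hac hgt)
            have h5 := not_lt.mp (hcbw hltb)
            exact absurd (h4.trans h5) (not_le.mpr hwpos)
      · exact hcb heqb
      · -- b < c: (b,c) ∈ InvSet v ⊆ InvSet w; (a,c) forced into InvSet w \ InvSet v or contradiction
        have h1 : (b, c) ∈ InvSet v := by
          rw [mem_invSet]; exact ⟨hgtb, by rw [hvc]; exact hpcpb⟩
        have h1w := hsub h1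
        rw [mem_invSet] at h1w
        by_cases hac : (a, c) ∈ InvSet w
        · have h3 : (a, c) ∉ InvSet v := by
            rw [mem_invSet, not_and]
            intro _
            rw [hvc]
            exact not_lt.mpr hpapc.le
          have := hpmin (a, c) (Finset.mem_sdiff.mpr ⟨hac, h3⟩)
          simp only [hvc, ← hpa, ← hpb] at this
          have hpcval : (pc:ℕ) = (pa:ℕ)+1 := rfl
          omega
        · rw [mem_invSet, not_and] at hac
          have h4 := not_lt.mp (hac (hab.trans hgtb))
          exact absurd (h4.trans_lt (h1w.2.trans hwpos)) (lt_irrefl _)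

lemma weak_of_invSet_subset {n : ℕ} (w : Equiv.Perm (Fin n)) :
    ∀ (m : ℕ) (v : Equiv.Perm (Fin n)), (InvSet w).card ≤ (InvSet v).card + m →
      InvSet v ⊆ InvSet w → weakLe v w := by
  intro m
  induction m with
  | zero =>
    intro v hcard hsub
    have : InvSet v = InvSet w := Finset.eq_of_subset_of_card_le hsub (by omega)
    rw [eq_of_invSet_eq this]
    exact Relation.ReflTransGen.refl
  | succ m ih =>
    intro v hcard hsub
    rcases eq_or_ne v w with rfl | hne
    · exact Relation.ReflTransGen.refl
    obtain ⟨i, h, hasc, hsub', hcard'⟩ := exists_ascent_step hsub hne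
    have hstep : weakLe v (v * Equiv.swap i ⟨(i:ℕ)+1, h⟩) :=
      Relation.ReflTransGen.single ⟨i, h, hasc, rfl⟩
    exact hstep.trans (ih _ (by omega) hsub')

/-- On 132-avoiding permutations, the middle order coincides with the weak order. -/
theorem middle_eq_weak_on_132_avoiders (n : ℕ) (v w : Equiv.Perm (Fin n))
    (hv : Avoids132 v) (hw : Avoids132 w) :
    midLe v w ↔ weakLe v w := by
  constructor
  · intro hmid
    apply weak_of_invSet_subset w ((InvSet w).card) v (Nat.le_add_left _ _)
    intro p hp
    obtain ⟨a, b⟩ := p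
    rw [mem_invSet_iff_of_avoids hv] at hp
    rw [mem_invSet_iff_of_avoids hw]
    exact lt_of_lt_of_le hp (hmid b)
  · intro hweak
    clear hv hw
    induction hweak with
    | refl => intro k; exact le_refl _
    | tail h1 h2 ih =>
      obtain ⟨i, h, hasc, rfl⟩ := h2
      intro k
      refine le_trans (ih k) ?_
      rw [invSeq_eq, invSeq_eq]
      apply Finset.card_le_card
      intro j hj
      rw [Finset.mem_filter] at hj ⊢
      refine ⟨hj.1, ?_⟩
      rw [invSet_mul_swap _ i h hasc]
      exact Finset.mem_insert_of_mem hj.2
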